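/- Let n ≥ 2, B ⊂ ℝ^n the open unit ball, and u : B → ℝ, u(x) = −√(1 − |x|), whose gradient at x ≠ 0 is ∇u(x) = x/(2|x|√(1−|x|)). Then ∫_B F_1^*(x, ∇u(x))² dx = (1/4)∫_B (1 − |x|) dx = ω_n/(4(n+1)), and ∫_B u(x)² dx = ω_n/(n+1), where ω_n is the Lebesgue volume of B. -/

import Mathlib

set_option maxHeartbeats 1000000

open Metric MeasureTheory

/-- The polar transform of the Funk metric: `F_1^*(x,y) = |y| - ⟨x,y⟩`. -/
noncomputable def F1Star (n : ℕ) (x y : EuclideanSpace ℝ (Fin n)) : ℝ :=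
  ‖y‖ - (inner ℝ x y : ℝ)

lemma radial_int (n : ℕ) (hn : 2 ≤ n) :
    (∫ x in ball (0 : EuclideanSpace ℝ (Fin n)) 1, (1 - ‖x‖)) =
      (volume (ball (0 : EuclideanSpace ℝ (Fin n)) 1)).toReal / (n + 1) := by
  haveI : Nontrivial (EuclideanSpace ℝ (Fin n)) :=
    Module.nontrivial_of_finrank_pos (R := ℝ) (by simp [finrank_euclideanSpace]; omega)
  set f : ℝ → ℝ := fun r => if r < 1 then 1 - r else 0 with hf
  have h1 : (∫ x in ball (0 : EuclideanSpace ℝ (Fin n)) 1, (1 - ‖x‖)) =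
      ∫ x : EuclideanSpace ℝ (Fin n), f ‖x‖ := by
    rw [← integral_indicator measurableSet_ball]
    congr 1
    ext x
    by_cases hx : x ∈ ball (0 : EuclideanSpace ℝ (Fin n)) 1
    · simp [hx, f, mem_ball_zero_iff.mp hx]
    · simp [hx, f, not_lt.mpr (by simpa using not_lt.mp (fun h => hx (mem_ball_zero_iff.mpr h)))]
  rw [h1, integral_fun_norm_addHaar volume f, finrank_euclideanSpace, Fintype.card_fin]
  have h2 : (∫ y in Set.Ioi (0:ℝ), y ^ (n-1) • f y) = 1 / (n * (n+1)) := by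
    rw [setIntegral_eq_of_subset_of_ae_diff_eq_zero measurableSet_Ioi.nullMeasurableSet
      (Set.Ioo_subset_Ioi_self : Set.Ioo (0:ℝ) 1 ⊆ Set.Ioi 0) ?_]
    · have : (∫ y in Set.Ioo (0:ℝ) 1, y ^ (n-1) • f y) =
          ∫ y in Set.Ioo (0:ℝ) 1, (y ^ (n-1) - y ^ n) := by
        apply setIntegral_congr_fun measurableSet_Ioo
        intro y hy
        have : y ^ (n - 1) * y = y ^ n := by
          rw [← pow_succ]; congr 1; omega
        simp only [smul_eq_mul, f, if_pos hy.2, mul_sub, mul_one, this]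
      rw [this, ← integral_Ioc_eq_integral_Ioo,
        ← intervalIntegral.integral_of_le (by norm_num : (0:ℝ) ≤ 1)]
      rw [intervalIntegral.integral_sub (intervalIntegral.intervalIntegrable_pow _)
        (intervalIntegral.intervalIntegrable_pow _), integral_pow, integral_pow]
      have h1 : (n:ℝ) ≠ 0 := by positivity
      have h2 : ((n:ℝ) + 1) ≠ 0 := by positivity
      have hn1 : ((n:ℕ) - 1 + 1 : ℕ) = n := by omega
      rw [hn1]
      field_simp
      rw [show ((n - 1 : ℕ) : ℝ) + 1 = n by exact_mod_cast hn1, one_pow, one_pow,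
        zero_pow (by omega), zero_pow (by omega)]
      ring
    · filter_upwards with y hy
      rcases hy with ⟨hy1, hy2⟩
      have : ¬ y < 1 := fun h => hy2 ⟨Set.mem_Ioi.mp hy1, h⟩
      simp [f, this]
  rw [h2]
  have h1 : (n:ℝ) ≠ 0 := by positivity
  simp only [nsmul_eq_mul, smul_eq_mul]
  field_simp
  ring
  rfl

theorem stmt_10 (n : ℕ) (hn : 2 ≤ n) :
    (∀ x : EuclideanSpace ℝ (Fin n), x ∈ ball (0 : EuclideanSpace ℝ (Fin n)) 1 → x ≠ 0 →
      HasGradientAt (fun z : EuclideanSpace ℝ (Fin n) => -Real.sqrt (1 - ‖z‖))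
        ((2 * ‖x‖ * Real.sqrt (1 - ‖x‖))⁻¹ • x) x) ∧
    (∫ x in ball (0 : EuclideanSpace ℝ (Fin n)) 1,
        (F1Star n x ((2 * ‖x‖ * Real.sqrt (1 - ‖x‖))⁻¹ • x)) ^ 2) =
      (1 / 4) * ∫ x in ball (0 : EuclideanSpace ℝ (Fin n)) 1, (1 - ‖x‖) ∧
    (∫ x in ball (0 : EuclideanSpace ℝ (Fin n)) 1,
        (F1Star n x ((2 * ‖x‖ * Real.sqrt (1 - ‖x‖))⁻¹ • x)) ^ 2) =
      (volume (ball (0 : EuclideanSpace ℝ (Fin n)) 1)).toReal / (4 * (n + 1)) ∧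
    (∫ x in ball (0 : EuclideanSpace ℝ (Fin n)) 1, (-Real.sqrt (1 - ‖x‖)) ^ 2) =
      (volume (ball (0 : EuclideanSpace ℝ (Fin n)) 1)).toReal / (n + 1) := by
  haveI : Nontrivial (EuclideanSpace ℝ (Fin n)) :=
    Module.nontrivial_of_finrank_pos (R := ℝ) (by simp [finrank_euclideanSpace]; omega)
  set E := EuclideanSpace ℝ (Fin n)
  -- Part 1: gradient
  have grad : ∀ x : E, x ∈ ball (0 : E) 1 → x ≠ 0 →
      HasGradientAt (fun z : E => -Real.sqrt (1 - ‖z‖))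
        ((2 * ‖x‖ * Real.sqrt (1 - ‖x‖))⁻¹ • x) x := by
    intro x hx hx0
    have hxlt : ‖x‖ < 1 := mem_ball_zero_iff.mp hx
    have hxpos : (0:ℝ) < ‖x‖ := norm_pos_iff.mpr hx0
    have h1x : (0:ℝ) < 1 - ‖x‖ := by linarith
    have hs : (0:ℝ) < Real.sqrt (1 - ‖x‖) := Real.sqrt_pos.mpr h1x
    -- derivative of the norm
    have hnorm : HasFDerivAt (fun z : E => ‖z‖) (‖x‖⁻¹ • innerSL ℝ x) x := by
      have hsq : HasFDerivAt (fun z : E => ‖z‖ ^ 2) (2 • innerSL ℝ x) x :=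
        (hasStrictFDerivAt_norm_sq x).hasFDerivAt
      have hs2 : HasDerivAt Real.sqrt (1 / (2 * Real.sqrt (‖x‖ ^ 2))) (‖x‖ ^ 2) :=
        Real.hasDerivAt_sqrt (by positivity)
      have := hs2.comp_hasFDerivAt x hsq
      have hfun : (Real.sqrt ∘ fun z : E => ‖z‖ ^ 2) = fun z : E => ‖z‖ := by
        funext z; simp [Function.comp, Real.sqrt_sq (norm_nonneg z)]
      rw [hfun] at this
      have hCLM : (1 / (2 * Real.sqrt (‖x‖ ^ 2)) : ℝ) • (2 • innerSL ℝ x)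
          = ‖x‖⁻¹ • innerSL ℝ x := by
        rw [Real.sqrt_sq (norm_nonneg x)]
        ext y
        simp only [ContinuousLinearMap.smul_apply, smul_eq_mul, nsmul_eq_mul, Nat.cast_ofNat]
        field_simp
      rwa [hCLM] at this
    have hout : HasDerivAt (fun t : ℝ => -Real.sqrt (1 - t))
        (-(-1 / (2 * Real.sqrt (1 - ‖x‖)))) ‖x‖ := by
      have h1 : HasDerivAt (fun t : ℝ => 1 - t) (-1) ‖x‖ := (hasDerivAt_id' ‖x‖).const_sub 1
      exact (h1.sqrt h1x.ne').neg
    have H := hout.comp_hasFDerivAt x hnorm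
    have heq : (InnerProductSpace.toDual ℝ E) ((2 * ‖x‖ * Real.sqrt (1 - ‖x‖))⁻¹ • x) =
        (-(-1 / (2 * Real.sqrt (1 - ‖x‖)))) • (‖x‖⁻¹ • innerSL ℝ x) := by
      ext y
      simp only [InnerProductSpace.toDual_apply_apply, ContinuousLinearMap.smul_apply,
        smul_eq_mul, innerSL_apply_apply]
      rw [real_inner_smul_left]
      field_simp
    rw [hasGradientAt_iff_hasFDerivAt, heq]
    exact H
  refine ⟨grad, ?_⟩
  -- pointwise value of the F1Star integrand
  have hpt : ∀ x : E, x ∈ ball (0 : E) 1 → x ≠ 0 →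
      (F1Star n x ((2 * ‖x‖ * Real.sqrt (1 - ‖x‖))⁻¹ • x)) ^ 2 = (1 - ‖x‖) / 4 := by
    intro x hx hx0
    have hxlt : ‖x‖ < 1 := (mem_ball_zero_iff (E := EuclideanSpace ℝ (Fin n))).mp hx
    have hxpos : (0:ℝ) < ‖x‖ := norm_pos_iff.mpr hx0
    have h1x : (0:ℝ) < 1 - ‖x‖ := by linarith
    have hs : (0:ℝ) < Real.sqrt (1 - ‖x‖) := Real.sqrt_pos.mpr h1x
    set c : ℝ := (2 * ‖x‖ * Real.sqrt (1 - ‖x‖))⁻¹ with hc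
    have hcpos : 0 < c := by positivity
    have hF : F1Star n x (c • x) = c * ‖x‖ * (1 - ‖x‖) := by
      unfold F1Star
      rw [norm_smul, real_inner_smul_right, real_inner_self_eq_norm_sq]
      rw [Real.norm_eq_abs, abs_of_pos hcpos]
      ring
    rw [hF]
    have hcx : c * ‖x‖ = (2 * Real.sqrt (1 - ‖x‖))⁻¹ := by
      rw [hc]; field_simp
    rw [hcx]
    have hsq : Real.sqrt (1 - ‖x‖) ^ 2 = 1 - ‖x‖ := Real.sq_sqrt h1x.le
    field_simp
    rw [hsq]
    ring
  -- a.e. congruence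
  have hae : (∫ x in ball (0 : E) 1,
        (F1Star n x ((2 * ‖x‖ * Real.sqrt (1 - ‖x‖))⁻¹ • x)) ^ 2) =
      ∫ x in ball (0 : E) 1, (1 - ‖x‖) / 4 := by
    apply setIntegral_congr_ae measurableSet_ball
    haveI : NullSingletonClass (volume : Measure E) := inferInstance
    have h0 : ∀ᵐ x : E ∂volume, x ≠ 0 := by
      rw [ae_iff]
      have hset : {a : E | ¬ a ≠ 0} = {0} := by ext y; simp
      rw [hset]
      exact measure_singleton 0
    filter_upwards [h0] with x hx0 hxball
    exact hpt x hxball hx0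
  have hrad := radial_int n hn
  have h2 : (∫ x in ball (0 : E) 1,
        (F1Star n x ((2 * ‖x‖ * Real.sqrt (1 - ‖x‖))⁻¹ • x)) ^ 2) =
      (1 / 4) * ∫ x in ball (0 : E) 1, (1 - ‖x‖) := by
    rw [hae, integral_div]; ring
  refine ⟨h2, ?_, ?_⟩
  · have hne : ((n:ℝ) + 1) ≠ 0 := by positivity
    rw [h2, hrad]
    field_simp
  · have : (∫ x in ball (0 : E) 1, (-Real.sqrt (1 - ‖x‖)) ^ 2) =
        ∫ x in ball (0 : E) 1, (1 - ‖x‖) := by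
      apply setIntegral_congr_fun measurableSet_ball
      intro x hx
      have hxlt : ‖x‖ < 1 := mem_ball_zero_iff.mp hx
      simp only [neg_sq]
      exact Real.sq_sqrt (by linarith : (0:ℝ) ≤ 1 - ‖x‖)
    rw [this, hrad]
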